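/- For every α ∈ (0, 1], set y_α = 150 if α ≤ 1/2 and y_α = 105 − 50·α if α > 1/2. Then the cubic polynomial p_α has a root in the open interval (0, 50), a root in the open interval (50, y_α), and a root in the open interval (y_α, ∞). -/

import Mathlib

noncomputable section

/-- Coefficient `c₀(α) = 1024000·(2α² + α + 2)`. -/
def c0 (α : ℝ) : ℝ := 1024000 * (2 * α ^ 2 + α + 2)

/-- Coefficient `c₁(α) = −1600·(α³·(60 − 19α) + 47α² + 136α + 36)`. -/
def c1 (α : ℝ) : ℝ := -1600 * (α ^ 3 * (60 - 19 * α) + 47 * α ^ 2 + 136 * α + 36)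

/-- Coefficient `c₂(α) = 20·(α³·(222 − 35α³) + (16 − 15α⁵) + 12α⁴ + 188α² + 112α)`. -/
def c2 (α : ℝ) : ℝ :=
  20 * (α ^ 3 * (222 - 35 * α ^ 3) + (16 - 15 * α ^ 5) + 12 * α ^ 4 + 188 * α ^ 2 + 112 * α)

/-- Coefficient `c₃(α) = −(α⁴·(26 − 21α) + α²·(41 − 31α) + 52α + 8)·α²`. -/
def c3 (α : ℝ) : ℝ := -((α ^ 4 * (26 - 21 * α) + α ^ 2 * (41 - 31 * α) + 52 * α + 8) * α ^ 2)

/-- The cubic polynomial `p_α(x) = c₀(α) + c₁(α)·x + c₂(α)·x² + c₃(α)·x³`. -/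
def p (α x : ℝ) : ℝ := c0 α + c1 α * x + c2 α * x ^ 2 + c3 α * x ^ 3

/-- For `α ∈ (0,1]`, set `y_α = 150` if `α ≤ 1/2` and `y_α = 105 − 50·α` otherwise. -/
def y (α : ℝ) : ℝ := if α ≤ 1 / 2 then 150 else 105 - 50 * α

lemma p_cont (α : ℝ) : Continuous fun x => p α x := by
  unfold p; continuity

lemma hp0 (α : ℝ) (hα0 : 0 < α) : 0 < p α 0 := by
  simp only [p, c0]; nlinarith [sq_nonneg α]

lemma hp50 (α : ℝ) (hα0 : 0 < α) (hα1 : α ≤ 1) : p α 50 < 0 := by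
  have ha : (0:ℝ) ≤ α := hα0.le
  have hb : (0:ℝ) ≤ 1 - α := by linarith
  unfold p c0 c1 c2 c3
  nlinarith [mul_nonneg (pow_nonneg ha 1) (pow_nonneg hb 6),
    mul_nonneg (pow_nonneg ha 2) (pow_nonneg hb 5),
    mul_nonneg (pow_nonneg ha 3) (pow_nonneg hb 4),
    mul_nonneg (pow_nonneg ha 4) (pow_nonneg hb 3),
    mul_nonneg (pow_nonneg ha 5) (pow_nonneg hb 2),
    mul_nonneg (pow_nonneg ha 6) (pow_nonneg hb 1),
    pow_nonneg ha 7, pow_nonneg hb 7]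

lemma hpy (α : ℝ) (hα0 : 0 < α) (hα1 : α ≤ 1) : 0 < p α (y α) := by
  unfold y
  split_ifs with h
  · unfold p c0 c1 c2 c3
    nlinarith [sq_nonneg α, sq_nonneg (1-2*α), mul_pos hα0 hα0,
      sq_nonneg (α*(1-2*α)), sq_nonneg (α^2*(1-2*α)), sq_nonneg (α^3)]
  · push_neg at h
    unfold p c0 c1 c2 c3
    nlinarith [sq_nonneg (1-α), sq_nonneg (α*(1-α)), sq_nonneg (α^2*(1-α)),
      sq_nonneg (α^3*(1-α)), sq_nonneg (α^4*(1-α)),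
      mul_pos (by linarith : (0:ℝ) < 2*α-1) (by linarith : (0:ℝ) < 1-α+1),
      sq_nonneg ((2*α-1)*(1-α)), sq_nonneg (α^3*(2*α-1))]

lemma y_lt (α : ℝ) (hα0 : 0 < α) (hα1 : α ≤ 1) : 50 < y α ∧ y α ≤ 150 := by
  unfold y; split_ifs with h <;> constructor <;> linarith

/-- For every `α ∈ (0, 1]`, the cubic `p_α` has a root in `(0, 50)`,
a root in `(50, y_α)` and a root in `(y_α, ∞)`. -/
theorem stmt18 (α : ℝ) (hα0 : 0 < α) (hα1 : α ≤ 1) :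
    (∃ x : ℝ, 0 < x ∧ x < 50 ∧ p α x = 0) ∧
      (∃ x : ℝ, 50 < x ∧ x < y α ∧ p α x = 0) ∧
      (∃ x : ℝ, y α < x ∧ p α x = 0) := by
  have hcont : Continuous fun x => p α x := p_cont α
  have h0 := hp0 α hα0
  have h50 := hp50 α hα0 hα1
  have hy := hpy α hα0 hα1
  obtain ⟨hy50, hy150⟩ := y_lt α hα0 hα1
  -- the big point
  set S : ℝ := α ^ 4 * (26 - 21 * α) + α ^ 2 * (41 - 31 * α) + 52 * α + 8 with hSdef
  have hS : 8 ≤ S := by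
    have h1 : (0:ℝ) ≤ α ^ 4 * (26 - 21 * α) := by
      apply mul_nonneg (pow_nonneg hα0.le 4); linarith
    have h2 : (0:ℝ) ≤ α ^ 2 * (41 - 31 * α) := by
      apply mul_nonneg (pow_nonneg hα0.le 2); linarith
    nlinarith
  set b : ℝ := 2000 / α ^ 2 with hbdef
  have hα2 : (0:ℝ) < α ^ 2 := by positivity
  have hαb : α ^ 2 * b = 2000 := by rw [hbdef]; field_simp [hα2.ne']
  have hb2000 : (2000:ℝ) ≤ b := by
    rw [hbdef, le_div_iff₀ hα2]
    nlinarith [pow_le_one₀ hα0.le hα1 (n:=2)]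
  have hb0 : (0:ℝ) < b := by linarith
  have hyb : y α < b := by linarith
  have hc3 : c3 α = -(S * α ^ 2) := by unfold c3; rw [hSdef]
  have hc1 : c1 α ≤ 0 := by
    unfold c1
    nlinarith [mul_nonneg (pow_nonneg hα0.le 3) (by linarith : (0:ℝ) ≤ 60 - 19*α),
      sq_nonneg α]
  have hc0 : c0 α ≤ 5120000 := by
    unfold c0; nlinarith [pow_le_one₀ hα0.le hα1 (n:=2)]
  have hc2 : c2 α ≤ 11000 := by
    unfold c2
    nlinarith [pow_le_one₀ hα0.le hα1 (n:=2), pow_le_one₀ hα0.le hα1 (n:=3),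
      pow_le_one₀ hα0.le hα1 (n:=4), pow_nonneg hα0.le 5, pow_nonneg hα0.le 6]
  have hkey : c3 α * b ^ 3 = -(2000 * S * b ^ 2) := by
    rw [hc3]
    have : b ^ 3 = b * b ^ 2 := by ring
    rw [this]
    calc -(S * α ^ 2) * (b * b ^ 2) = -(S * (α ^ 2 * b) * b ^ 2) := by ring
      _ = -(2000 * S * b ^ 2) := by rw [hαb]; ring
  have hpb : p α b < 0 := by
    have hbsq : (2000:ℝ)^2 ≤ b ^ 2 := by nlinarith
    have h1 : c1 α * b ≤ 0 := mul_nonpos_of_nonpos_of_nonneg hc1 hb0.le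
    have h2 : (c2 α - 2000 * S) * b ^ 2 ≤ -5000 * b ^ 2 := by
      apply mul_le_mul_of_nonneg_right _ (sq_nonneg b)
      linarith
    unfold p
    rw [hkey]
    nlinarith [sq_nonneg b]
  refine ⟨?_, ?_, ?_⟩
  · have := intermediate_value_Ioo' (by norm_num : (0:ℝ) ≤ 50) hcont.continuousOn
    obtain ⟨x, hx, hpx⟩ := this ⟨h50, h0⟩
    exact ⟨x, hx.1, hx.2, hpx⟩
  · have := intermediate_value_Ioo (le_of_lt hy50) hcont.continuousOn
    obtain ⟨x, hx, hpx⟩ := this ⟨h50, hy⟩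
    exact ⟨x, hx.1, hx.2, hpx⟩
  · have := intermediate_value_Ioo' (le_of_lt hyb) hcont.continuousOn
    obtain ⟨x, hx, hpx⟩ := this ⟨hpb, hy⟩
    exact ⟨x, hx.1, hpx⟩
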